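/- For all n ≥ 1, R(n) = Σ_{k=0}^{n−1} C(k, ⌊k/2⌋)·C(n−k−1, ⌊(n−k−1)/2⌋), where R(n) is the total number of right steps in all dispersed Dyck paths of length n. -/

import Mathlib

inductive DStep | up | down | right
deriving DecidableEq, Repr

instance : Fintype DStep :=
  ⟨{DStep.up, DStep.down, DStep.right}, fun x => by cases x <;> simp⟩

/-- Run a dispersed Dyck path from height `h`; `none` if an illegal step occurs,
otherwise the final height. Down steps require positive height; right steps require height 0. -/
def DStep.run : ℕ → List DStep → Option ℕ
  | h, [] => some h
  | h, .up :: l => DStep.run (h + 1) l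
  | h + 1, .down :: l => DStep.run h l
  | 0, .down :: _ => none
  | 0, .right :: l => DStep.run 0 l
  | _ + 1, .right :: _ => none

/-- A dispersed Dyck path: starts and ends at height 0, all steps legal. -/
def IsDDP (l : List DStep) : Prop := DStep.run 0 l = some 0

instance : DecidablePred IsDDP := fun l => by unfold IsDDP; infer_instance

/-- The finset of all dispersed Dyck paths of length `n`. -/
def DDPs (n : ℕ) : Finset (List.Vector DStep n) :=
  Finset.univ.filter (fun v => IsDDP v.toList)

/-- Number of dispersed Dyck paths of length `n`. -/
def dD (n : ℕ) : ℕ := (DDPs n).card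

/-- Total number of up steps over all DDPs of length `n`. -/
def U (n : ℕ) : ℕ := ∑ v ∈ DDPs n, v.toList.count DStep.up

/-- Total number of down steps over all DDPs of length `n`. -/
def D (n : ℕ) : ℕ := ∑ v ∈ DDPs n, v.toList.count DStep.down

/-- Total number of right steps over all DDPs of length `n`. -/
def R (n : ℕ) : ℕ := ∑ v ∈ DDPs n, v.toList.count DStep.right

/-- `i` is the position of a 1-ascent in `l`: an up step with no adjacent up step. -/
def IsOneAscentAt (l : List DStep) (i : ℕ) : Prop :=
  l[i]? = some .up ∧ l[i + 1]? ≠ some .up ∧ (i = 0 ∨ l[i - 1]? ≠ some .up)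

instance (l : List DStep) : DecidablePred (IsOneAscentAt l) := fun i => by
  unfold IsOneAscentAt; infer_instance

/-- Number of 1-ascents in `l`. -/
def oneAsc (l : List DStep) : ℕ :=
  ((Finset.range l.length).filter (IsOneAscentAt l)).card

/-- Total number of 1-ascents over all DDPs of length `n`. -/
def A (n : ℕ) : ℕ := ∑ v ∈ DDPs n, oneAsc v.toList

/-- Signed final height of a plain path (ignoring any right steps). -/
def psum : List DStep → ℤ
  | [] => 0
  | .up :: l => 1 + psum l
  | .down :: l => -1 + psum l
  | .right :: l => psum l

open Finset

/-- All lists of length `n` over `DStep`. -/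
def allL : ℕ → Finset (List DStep)
  | 0 => {[]}
  | n+1 => ((Finset.univ : Finset DStep) ×ˢ allL n).image fun p => p.1 :: p.2

lemma mem_allL {n : ℕ} {l : List DStep} : l ∈ allL n ↔ l.length = n := by
  induction n generalizing l with
  | zero => simp [allL, List.length_eq_zero_iff]
  | succ n ih =>
    simp only [allL, Finset.mem_image, Finset.mem_product, Finset.mem_univ, true_and]
    constructor
    · rintro ⟨⟨s, t⟩, ht, rfl⟩
      simp [ih.mp ht]
    · intro hl
      cases l with
      | nil => simp at hl
      | cons a t => exact ⟨(a, t), ih.mpr (by simpa using hl), rfl⟩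

/-- Legal paths from height 0 of length `n` ending at height `h`. -/
def LDh (n h : ℕ) : Finset (List DStep) :=
  (allL n).filter (fun l => DStep.run 0 l = some h)

lemma run_append (l1 l2 : List DStep) (a : ℕ) :
    DStep.run a (l1 ++ l2) = (DStep.run a l1).bind fun b => DStep.run b l2 := by
  induction l1 generalizing a with
  | nil => simp [DStep.run]
  | cons s l ih => cases s <;> cases a <;> simp [DStep.run, ih]

lemma allL_succ (n : ℕ) :
    allL (n+1) = ((allL n) ×ˢ (Finset.univ : Finset DStep)).image fun p => p.1 ++ [p.2] := by
  ext l
  simp only [mem_allL, Finset.mem_image, Finset.mem_product, Finset.mem_univ, and_true]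
  constructor
  · intro hl
    have hne : l ≠ [] := by rintro rfl; simp at hl
    refine ⟨(l.dropLast, l.getLast hne), ?_, List.dropLast_append_getLast hne⟩
    simp only [mem_allL, List.length_dropLast]
    omega
  · rintro ⟨⟨t, s⟩, ht, rfl⟩
    have : t.length = n := by simpa using ht
    simp [this]

lemma DStep.sum_univ {M : Type*} [AddCommMonoid M] (f : DStep → M) :
    ∑ s : DStep, f s = f .up + f .down + f .right := by
  rw [show (Finset.univ : Finset DStep) = {DStep.up, DStep.down, DStep.right} from rfl]
  rw [Finset.sum_insert (by decide), Finset.sum_insert (by decide), Finset.sum_singleton]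
  exact (add_assoc _ _ _).symm

lemma card_LDh_succ (n h : ℕ) :
    (LDh (n+1) h).card =
      ∑ s : DStep, ((allL n).filter fun l =>
        (DStep.run 0 l).bind (fun b => DStep.run b [s]) = some h).card := by
  unfold LDh
  rw [allL_succ, Finset.filter_image, Finset.card_image_of_injOn]
  · rw [Finset.card_filter, Finset.sum_product, Finset.sum_comm]
    refine Finset.sum_congr rfl fun s _ => ?_
    rw [Finset.card_filter]
    refine Finset.sum_congr rfl fun l _ => ?_
    rw [run_append]
  · intro p _ q _ hpq
    obtain ⟨h1, h2⟩ := List.append_inj' hpq rfl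
    simp only [List.cons.injEq, and_true] at h2
    exact Prod.ext h1 h2

lemma pascal0 (n : ℕ) :
    (n+1).choose ((n+2)/2) = n.choose ((n+2)/2) + n.choose ((n+1)/2) := by
  rcases Nat.even_or_odd n with ⟨m, rfl⟩ | ⟨m, rfl⟩
  · have e1 : (m + m + 2)/2 = m + 1 := by omega
    have e2 : (m + m + 1)/2 = m := by omega
    rw [e1, e2, Nat.choose_succ_succ, add_comm]
  · have e1 : (2*m + 1 + 2)/2 = m + 1 := by omega
    have e2 : (2*m + 1 + 1)/2 = m + 1 := by omega
    rw [e1, e2, Nat.choose_succ_succ]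
    congr 1
    have := Nat.choose_symm (n := 2*m+1) (k := m+1) (by omega)
    simpa [show 2*m+1 - (m+1) = m by omega] using this

lemma card_LDh (n h : ℕ) : (LDh n h).card = n.choose ((n + h + 1)/2) := by
  induction n generalizing h with
  | zero =>
    rcases h with _ | h
    · decide
    · rw [show (0 + (h+1) + 1)/2 = h/2 + 1 from by omega]
      simp [LDh, allL, DStep.run, Finset.filter_singleton]
  | succ n ih =>
    rw [card_LDh_succ, DStep.sum_univ]
    have hup : ∀ l, ((DStep.run 0 l).bind (fun b => DStep.run b [.up]) = some h) ↔
        (∃ b, DStep.run 0 l = some b ∧ b + 1 = h) := by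
      intro l
      simp [Option.bind_eq_some_iff, DStep.run]
    have hdown : ((allL n).filter fun l =>
        (DStep.run 0 l).bind (fun b => DStep.run b [.down]) = some h)
        = LDh n (h+1) := by
      unfold LDh
      refine Finset.filter_congr fun l _ => ?_
      constructor
      · intro hl
        rw [Option.bind_eq_some_iff] at hl
        obtain ⟨b, hb, hrun⟩ := hl
        cases b with
        | zero => simp [DStep.run] at hrun
        | succ b =>
          simp only [DStep.run] at hrun
          obtain rfl : b = h := by simpa using hrun
          exact hb
      · intro hl
        rw [hl]
        simp [DStep.run]
    have hright : ∀ l, ((DStep.run 0 l).bind (fun b => DStep.run b [.right]) = some h) ↔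
        (h = 0 ∧ DStep.run 0 l = some 0) := by
      intro l
      rw [Option.bind_eq_some_iff]
      constructor
      · rintro ⟨b, hb, hrun⟩
        cases b with
        | zero => simp only [DStep.run] at hrun; obtain rfl : (0:ℕ) = h := by simpa using hrun
                  exact ⟨rfl, hb⟩
        | succ b => simp [DStep.run] at hrun
      · rintro ⟨rfl, hl⟩
        exact ⟨0, hl, by simp [DStep.run]⟩
    rw [hdown]
    rcases h with _ | h
    · have h1 : ((allL n).filter fun l =>
          (DStep.run 0 l).bind (fun b => DStep.run b [.up]) = some 0) = ∅ := by
        refine Finset.filter_false_of_mem fun l _ => ?_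
        rw [hup]; rintro ⟨b, _, hb⟩; omega
      have h2 : ((allL n).filter fun l =>
          (DStep.run 0 l).bind (fun b => DStep.run b [.right]) = some 0) = LDh n 0 := by
        unfold LDh
        refine Finset.filter_congr fun l _ => ?_
        rw [hright]; simp
      rw [h1, h2, ih, ih]
      simp only [Finset.card_empty, Nat.zero_add]
      rw [show n + 1 + 0 + 1 = n + 2 from by omega, show n + 1 + 1 = n + 2 from by omega,
        show n + 0 + 1 = n + 1 from by omega]
      exact (pascal0 n).symm
    · have h1 : ((allL n).filter fun l =>
          (DStep.run 0 l).bind (fun b => DStep.run b [.up]) = some (h+1)) = LDh n h := by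
        unfold LDh
        refine Finset.filter_congr fun l _ => ?_
        rw [hup]
        constructor
        · rintro ⟨b, hb, hbe⟩
          have hb' : b = h := by omega
          rw [hb'] at hb; exact hb
        · intro hl; exact ⟨h, hl, rfl⟩
      have h2 : ((allL n).filter fun l =>
          (DStep.run 0 l).bind (fun b => DStep.run b [.right]) = some (h+1)) = ∅ := by
        refine Finset.filter_false_of_mem fun l _ => ?_
        rw [hright]; rintro ⟨hc, _⟩; omega
      rw [h1, h2, ih, ih]
      simp only [Finset.card_empty, Nat.add_zero]
      have e1 : (n + (h+1) + 1 + 1)/2 = (n + h + 1)/2 + 1 := by omega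
      have e1 : (n + 1 + (h+1) + 1)/2 = (n + h + 1)/2 + 1 := by omega
      have e2 : (n + (h+1+1) + 1)/2 = (n + h + 1)/2 + 1 := by omega
      rw [e1, e2, Nat.choose_succ_succ]
lemma sum_DDPs_eq (n : ℕ) (f : List DStep → ℕ) :
    ∑ v ∈ DDPs n, f v.toList = ∑ l ∈ LDh n 0, f l := by
  refine Finset.sum_bij' (fun v _ => v.toList)
    (fun l hl => (⟨l, mem_allL.mp (Finset.mem_filter.mp hl).1⟩ : List.Vector DStep n))
    ?_ ?_ ?_ ?_ ?_
  · intro v hv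
    simp only [DDPs, Finset.mem_filter, Finset.mem_univ, true_and, IsDDP] at hv
    simp only [LDh, Finset.mem_filter, mem_allL]
    exact ⟨v.toList_length, (Finset.mem_filter.mp hv).2⟩
  · intro l hl
    simp only [DDPs, Finset.mem_filter, Finset.mem_univ, true_and, IsDDP]
    exact Finset.mem_filter.mpr ⟨Finset.mem_univ _, (Finset.mem_filter.mp hl).2⟩
  · intro v _
    exact List.Vector.toList_injective rfl
  · intro l _
    rfl
  · intro v _
    rfl

lemma card_LD (n : ℕ) : (LDh n 0).card = n.choose (n / 2) := by
  rw [card_LDh]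
  rcases Nat.even_or_odd n with ⟨m, rfl⟩ | ⟨m, rfl⟩
  · congr 1
    omega
  · rw [show (2*m+1 + 0 + 1)/2 = m + 1 from by omega, show (2*m+1)/2 = m from by omega]
    have := Nat.choose_symm (n := 2*m+1) (k := m+1) (by omega)
    simpa [show 2*m+1 - (m+1) = m by omega] using this.symm

lemma dD_eq (n : ℕ) : dD n = n.choose (n / 2) := by
  rw [dD, Finset.card_eq_sum_ones, sum_DDPs_eq n (fun _ => 1),
    ← Finset.card_eq_sum_ones, card_LD]

lemma count_eq (l : List DStep) (a : DStep) :
    l.count a = ∑ i ∈ Finset.range l.length, if l[i]? = some a then 1 else 0 := by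
  induction l with
  | nil => simp
  | cons b t ih =>
    rw [List.count_cons, List.length_cons, Finset.sum_range_succ']
    simp only [List.getElem?_cons_succ, List.getElem?_cons_zero, Option.some.injEq]
    rw [ih]
    congr 1
    simp [beq_iff_eq]

lemma run_right_split (l1 l2 : List DStep) :
    DStep.run 0 (l1 ++ .right :: l2) = some 0 ↔
      (DStep.run 0 l1 = some 0 ∧ DStep.run 0 l2 = some 0) := by
  rw [run_append]
  cases hb : DStep.run 0 l1 with
  | none => simp
  | some b =>
    cases b with
    | zero => simp [DStep.run]
    | succ b => simp [DStep.run]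

lemma card_marked (n i : ℕ) (hi : i < n) :
    ((LDh n 0).filter fun l => l[i]? = some .right).card
      = (LDh i 0).card * (LDh (n - 1 - i) 0).card := by
  rw [← Finset.card_product]
  refine Finset.card_bij' (fun l _ => (l.take i, l.drop (i+1)))
    (fun p _ => p.1 ++ .right :: p.2) ?_ ?_ ?_ ?_
  · intro l hl
    simp only [Finset.mem_filter, LDh, mem_allL] at hl
    obtain ⟨⟨hlen, hrun⟩, hget⟩ := hl
    have hlt : i < l.length := by omega
    have hgetl : l[i] = DStep.right := by
      have h1 : l[i]? = some DStep.right := hget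
      have h2 : l[i]? = some l[i] := List.getElem?_eq_getElem hlt
      rw [h1] at h2
      exact (Option.some.injEq _ _ ▸ h2).symm
    have hdecomp : l = l.take i ++ .right :: l.drop (i+1) := by
      conv_lhs => rw [← List.take_append_drop i l, List.drop_eq_getElem_cons hlt, hgetl]
    rw [hdecomp, run_right_split] at hrun
    simp only [Finset.mem_product, LDh, Finset.mem_filter, mem_allL]
    refine ⟨⟨?_, hrun.1⟩, ?_, hrun.2⟩
    · rw [List.length_take]; omega
    · rw [List.length_drop]; omega
  · rintro ⟨l1, l2⟩ hp
    simp only [Finset.mem_product, LDh, Finset.mem_filter, mem_allL] at hp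
    obtain ⟨⟨h1len, h1run⟩, h2len, h2run⟩ := hp
    simp only [Finset.mem_filter, LDh, mem_allL]
    refine ⟨⟨?_, (run_right_split _ _).mpr ⟨h1run, h2run⟩⟩, ?_⟩
    · simp only [List.length_append, List.length_cons]
      omega
    · rw [List.getElem?_append_right (by omega), h1len]
      simp
  · intro l hl
    simp only [Finset.mem_filter, LDh, mem_allL] at hl
    obtain ⟨⟨hlen, hrun⟩, hget⟩ := hl
    have hlt : i < l.length := by omega
    have hgetl : l[i] = DStep.right := by
      have h1 : l[i]? = some DStep.right := hget
      have h2 : l[i]? = some l[i] := List.getElem?_eq_getElem hlt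
      rw [h1] at h2
      exact (Option.some.injEq _ _ ▸ h2).symm
    conv_rhs => rw [← List.take_append_drop i l, List.drop_eq_getElem_cons hlt, hgetl]
  · rintro ⟨l1, l2⟩ hp
    simp only [Finset.mem_product, LDh, Finset.mem_filter, mem_allL] at hp
    obtain ⟨⟨h1len, _⟩, _, _⟩ := hp
    have ht : (l1 ++ DStep.right :: l2).take i = l1 := List.take_left' h1len
    have hd : (l1 ++ DStep.right :: l2).drop (i+1) = l2 := by
      rw [List.append_cons, List.drop_left' (by simp [h1len])]
    dsimp only
    rw [ht, hd]
/-- For `n ≥ 1`, the total number of right steps over all DDPs of length `n` equals the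
convolution `Σ_{k=0}^{n−1} C(k,⌊k/2⌋)·C(n−k−1,⌊(n−k−1)/2⌋)`. -/
theorem right_convolution (n : ℕ) (hn : 1 ≤ n) :
    R n = ∑ k ∈ Finset.range n, k.choose (k / 2) * (n - k - 1).choose ((n - k - 1) / 2) := by
  rw [R, sum_DDPs_eq n (fun l => l.count DStep.right)]
  have hcnt : ∀ l ∈ LDh n 0, l.count DStep.right
      = ∑ i ∈ Finset.range n, if l[i]? = some DStep.right then 1 else 0 := by
    intro l hl
    have hlen : l.length = n := mem_allL.mp (Finset.mem_filter.mp hl).1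
    rw [count_eq, hlen]
  rw [Finset.sum_congr rfl hcnt, Finset.sum_comm]
  refine Finset.sum_congr rfl fun k hk => ?_
  rw [← Finset.card_filter, card_marked n k (Finset.mem_range.mp hk), card_LD, card_LD,
    show n - 1 - k = n - k - 1 from by omega]
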